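/- Let 0<p<q≤1 and let X be an n-dimensional p-normed space. Define the q-Banach envelope X^q as the q-normed space whose unit ball is the q-convex hull of the unit ball of X. Then the Banach-Mazur distance satisfies d(X, X^q) ≤ n^{1/p - 1/q}. -/

import Mathlib

open Finset

def PConvex {X : Type*} [AddCommGroup X] [Module ℝ X] (p : ℝ) (S : Set X) : Prop :=
  ∀ x ∈ S, ∀ y ∈ S, ∀ a b : ℝ, 0 ≤ a → 0 ≤ b → a ^ p + b ^ p = 1 → a • x + b • y ∈ S

def pConvHull {X : Type*} [AddCommGroup X] [Module ℝ X] (p : ℝ) (A : Set X) : Set X :=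
  ⋂₀ {S : Set X | PConvex p S ∧ A ⊆ S}

open Pointwise

-- p-triangle for sums
lemma aux_sum_pow {n : ℕ} {N : (Fin n → ℝ) → ℝ} {p : ℝ} (hp0 : 0 < p)
    (hNzero : N 0 = 0)
    (hNp : ∀ x y : Fin n → ℝ, N (x + y) ^ p ≤ N x ^ p + N y ^ p) :
    ∀ (k : ℕ) (x : Fin k → Fin n → ℝ), N (∑ i, x i) ^ p ≤ ∑ i, N (x i) ^ p := by
  intro k
  induction k with
  | zero => intro x; simp [hNzero, Real.zero_rpow hp0.ne']
  | succ m ih =>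
    intro x
    rw [Fin.sum_univ_succ, Fin.sum_univ_succ]
    have h1 := hNp (x 0) (∑ i : Fin m, x i.succ)
    have h2 := ih (fun i => x i.succ)
    linarith

-- Hölder / power mean inequality
lemma aux_holder {p q : ℝ} (hp0 : 0 < p) (hpq : p < q) (k : ℕ)
    (lam : Fin k → ℝ) (hl : ∀ i, 0 ≤ lam i) (hs : ∑ i, lam i ^ q ≤ 1) :
    ∑ i, lam i ^ p ≤ (k : ℝ) ^ (1 - p / q) := by
  have hq0 : 0 < q := hp0.trans hpq
  rcases Nat.eq_zero_or_pos k with hk | hk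
  · subst hk
    simp only [Finset.univ_eq_empty, Finset.sum_empty]
    positivity
  have hkR : (0 : ℝ) < k := by exact_mod_cast hk
  have hmean := Real.arith_mean_le_rpow_mean (Finset.univ : Finset (Fin k))
    (fun _ => (k : ℝ)⁻¹) (fun i => lam i ^ p)
    (fun i _ => by positivity)
    (by simp [Finset.sum_const, Finset.card_univ, mul_inv_cancel₀ hkR.ne'])
    (fun i _ => Real.rpow_nonneg (hl i) p)
    (le_of_lt ((one_lt_div hp0).2 hpq) : 1 ≤ q / p)
  have hrw : ∀ i : Fin k, (lam i ^ p) ^ (q / p) = lam i ^ q := by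
    intro i
    rw [← Real.rpow_mul (hl i)]
    congr 1
    field_simp
  simp only [hrw] at hmean
  have h1p : 1 / (q / p) = p / q := by field_simp
  rw [h1p, ← Finset.mul_sum, ← Finset.mul_sum] at hmean
  have hS0 : 0 ≤ ∑ i, lam i ^ q := Finset.sum_nonneg fun i _ => Real.rpow_nonneg (hl i) q
  have h2 : ((k : ℝ)⁻¹ * ∑ i, lam i ^ q) ^ (p / q) ≤ ((k : ℝ)⁻¹) ^ (p / q) := by
    rw [Real.mul_rpow (by positivity) hS0]
    exact mul_le_of_le_one_right (by positivity)
      (Real.rpow_le_one hS0 hs (by positivity))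
  have h3 : (k : ℝ)⁻¹ * ∑ i, lam i ^ p ≤ ((k : ℝ)⁻¹) ^ (p / q) := le_trans hmean h2
  have h4 : ((k : ℝ)⁻¹) ^ (p / q) = (k : ℝ) ^ (-(p / q)) := by
    rw [Real.inv_rpow hkR.le, ← Real.rpow_neg hkR.le]
  calc ∑ i, lam i ^ p = (k : ℝ) * ((k : ℝ)⁻¹ * ∑ i, lam i ^ p) := by
        field_simp
    _ ≤ (k : ℝ) * ((k : ℝ)⁻¹) ^ (p / q) := by
        exact mul_le_mul_of_nonneg_left h3 hkR.le
    _ = (k : ℝ) ^ (1 - p / q) := by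
        rw [h4]
        have : (k : ℝ) ^ (1 - p / q) = (k : ℝ) ^ (1 : ℝ) * (k : ℝ) ^ (-(p / q)) := by
          rw [← Real.rpow_add hkR]; ring_nf
        rw [this, Real.rpow_one]

lemma aux_stepdir {k : ℕ} (lam c : Fin k → ℝ) (hl : ∀ i, 0 < lam i) (hc : ∃ i, c i < 0) :
    ∃ t : ℝ, 0 < t ∧ (∀ i, 0 ≤ lam i + t * c i) ∧ ∃ i, lam i + t * c i = 0 := by
  obtain ⟨i₁, hi₁⟩ := hc
  obtain ⟨i₀, hi₀, hmin⟩ := Finset.exists_min_image (Finset.univ.filter fun i => c i < 0)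
    (fun i => lam i / (-c i)) ⟨i₁, by simp [hi₁]⟩
  simp only [Finset.mem_filter, Finset.mem_univ, true_and] at hi₀ hmin
  have hci₀ : 0 < -c i₀ := neg_pos.2 hi₀
  refine ⟨lam i₀ / (-c i₀), div_pos (hl i₀) hci₀, ?_, ⟨i₀, ?_⟩⟩
  · intro i
    by_cases h : c i < 0
    · have h1 : lam i₀ / (-c i₀) ≤ lam i / (-c i) := hmin i (by simp [h])
      have h2 : lam i₀ / (-c i₀) * (-c i) ≤ lam i :=
        (le_div_iff₀ (neg_pos.2 h)).1 h1
      nlinarith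
    · push_neg at h
      have ht : 0 < lam i₀ / (-c i₀) := div_pos (hl i₀) hci₀
      nlinarith [hl i]
  · field_simp; rw [div_self hi₀.ne]; ring



-- monotone one-sided step
lemma aux_mono {n k : ℕ} {q : ℝ} (hq0 : 0 < q)
    (lam c : Fin k → ℝ) (P : Fin k → Fin n → ℝ)
    (hl : ∀ i, 0 < lam i) (hcle : ∀ i, c i ≤ 0) (hcneg : ∃ i, c i < 0)
    (hc0 : ∑ i, c i • P i = 0) (hs : ∑ i, lam i ^ q ≤ 1) :
    ∃ lam' : Fin k → ℝ, (∀ i, 0 ≤ lam' i) ∧ (∑ i, lam' i ^ q ≤ 1) ∧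
      (∑ i, lam' i • P i = ∑ i, lam i • P i) ∧ ∃ i, lam' i = 0 := by
  obtain ⟨t, ht, hpos, hzero⟩ := aux_stepdir lam c hl hcneg
  refine ⟨fun i => lam i + t * c i, hpos, ?_, ?_, hzero⟩
  · refine le_trans (Finset.sum_le_sum fun i _ => ?_) hs
    show (lam i + t * c i) ^ q ≤ lam i ^ q
    have hle : lam i + t * c i ≤ lam i := by
      nlinarith [mul_nonpos_of_nonneg_of_nonpos ht.le (hcle i)]
    exact Real.rpow_le_rpow (hpos i) hle hq0.le
  · simp only [add_smul, Finset.sum_add_distrib, mul_smul, ← Finset.smul_sum, hc0,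
      smul_zero, add_zero]

lemma aux_perturb {n : ℕ} {q : ℝ} (hq0 : 0 < q) (hq1 : q ≤ 1) {k : ℕ} (hk : n < k)
    (lam : Fin k → ℝ) (P : Fin k → Fin n → ℝ)
    (hl : ∀ i, 0 ≤ lam i) (hs : ∑ i, lam i ^ q ≤ 1) :
    ∃ lam' : Fin k → ℝ, (∀ i, 0 ≤ lam' i) ∧ (∑ i, lam' i ^ q ≤ 1) ∧
      (∑ i, lam' i • P i = ∑ i, lam i • P i) ∧ ∃ i, lam' i = 0 := by
  by_cases h0 : ∃ i, lam i = 0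
  · exact ⟨lam, hl, hs, rfl, h0⟩
  push_neg at h0
  have hl' : ∀ i, 0 < lam i := fun i => (hl i).lt_of_ne (Ne.symm (h0 i))
  have hdep : ¬ LinearIndependent ℝ P := by
    intro h
    have h1 := h.fintype_card_le_finrank
    rw [Module.finrank_fin_fun, Fintype.card_fin] at h1
    omega
  obtain ⟨g, hg0, i₁, hi₁⟩ := Fintype.not_linearIndependent_iff.1 hdep
  by_cases hgneg : ∃ i, g i < 0
  · by_cases hgpos : ∃ i, 0 < g i
    · -- mixed case: Jensen
      obtain ⟨tp, htp, hposp, hzerop⟩ := aux_stepdir lam g hl' hgneg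
      obtain ⟨tm, htm, hposm, hzerom⟩ := aux_stepdir lam (-g) hl'
        (by obtain ⟨i, hi⟩ := hgpos; exact ⟨i, by simpa using hi⟩)
      have hgm0 : ∑ i, (-g) i • P i = 0 := by
        simp only [Pi.neg_apply, neg_smul, Finset.sum_neg_distrib, hg0, neg_zero]
      set θ : ℝ := tm / (tp + tm) with hθdef
      have htpm : 0 < tp + tm := by linarith
      have hθ0 : 0 < θ := div_pos htm htpm
      have hθ1 : θ < 1 := by
        rw [div_lt_one htpm]; linarith
      have hjen : θ * (∑ i, (lam i + tp * g i) ^ q) +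
          (1 - θ) * (∑ i, (lam i + tm * (-g) i) ^ q) ≤ 1 := by
        refine le_trans ?_ hs
        rw [Finset.mul_sum, Finset.mul_sum, ← Finset.sum_add_distrib]
        refine Finset.sum_le_sum fun i _ => ?_
        have hcc := (Real.concaveOn_rpow hq0.le hq1).2
          (Set.mem_Ici.2 (hposp i)) (Set.mem_Ici.2 (hposm i)) hθ0.le
          (by linarith : (0:ℝ) ≤ 1 - θ) (by ring)
        simp only [smul_eq_mul] at hcc
        have harg : θ * (lam i + tp * g i) + (1 - θ) * (lam i + tm * (-g) i) = lam i := by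
          have h1 : (1 : ℝ) - θ = tp / (tp + tm) := by
            rw [hθdef]; field_simp; ring
          rw [h1, hθdef]
          field_simp
          simp only [Pi.neg_apply]; ring
        rwa [harg] at hcc
      by_cases hA : (∑ i, (lam i + tp * g i) ^ q) ≤ 1
      · refine ⟨fun i => lam i + tp * g i, hposp, hA, ?_, hzerop⟩
        simp only [add_smul, Finset.sum_add_distrib, mul_smul, ← Finset.smul_sum, hg0,
          smul_zero, add_zero]
      · have hSm0 : 0 ≤ ∑ i, (lam i + tm * (-g) i) ^ q :=
          Finset.sum_nonneg fun i _ => Real.rpow_nonneg (hposm i) q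
        have hB : (∑ i, (lam i + tm * (-g) i) ^ q) ≤ 1 := by
          push_neg at hA
          nlinarith
        refine ⟨fun i => lam i + tm * (-g) i, hposm, hB, ?_, hzerom⟩
        simp only [add_smul, Finset.sum_add_distrib, mul_smul, ← Finset.smul_sum, hgm0,
          smul_zero, add_zero]
    · push_neg at hgpos
      exact aux_mono hq0 lam g P hl' hgpos hgneg hg0 hs
  · push_neg at hgneg
    have hmneg : ∃ i, (-g) i < 0 := ⟨i₁, by simpa using (hgneg i₁).lt_of_ne (Ne.symm hi₁)⟩
    have hgm0 : ∑ i, (-g) i • P i = 0 := by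
      simp only [Pi.neg_apply, neg_smul, Finset.sum_neg_distrib, hg0, neg_zero]
    exact aux_mono hq0 lam (-g) P hl' (fun i => by simpa using hgneg i) hmneg hgm0 hs

lemma aux_key {p q : ℝ} (hp0 : 0 < p) (hpq : p < q) (hq1 : q ≤ 1)
    {n : ℕ} {N : (Fin n → ℝ) → ℝ}
    (hN0 : ∀ x, 0 ≤ N x) (hNzero : N 0 = 0)
    (hNh : ∀ (a : ℝ) (x : Fin n → ℝ), N (a • x) = |a| * N x)
    (hNp : ∀ x y : Fin n → ℝ, N (x + y) ^ p ≤ N x ^ p + N y ^ p) :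
    ∀ (k : ℕ) (lam : Fin k → ℝ) (P : Fin k → Fin n → ℝ), (∀ i, 0 ≤ lam i) →
      (∀ i, N (P i) ≤ 1) → ∑ i, lam i ^ q ≤ 1 →
      N (∑ i, lam i • P i) ≤ (n : ℝ) ^ ((1 : ℝ) / p - 1 / q) := by
  have hq0 : 0 < q := hp0.trans hpq
  intro k
  induction k using Nat.strong_induction_on with
  | _ k IH =>
  intro lam P hl hP hs
  by_cases hk : k ≤ n
  · -- direct computation
    have h5 : N (∑ i, lam i • P i) ^ p ≤ (n : ℝ) ^ (1 - p / q) := by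
      calc N (∑ i, lam i • P i) ^ p ≤ ∑ i, N (lam i • P i) ^ p :=
            aux_sum_pow hp0 hNzero hNp k _
        _ ≤ ∑ i, lam i ^ p := by
            refine Finset.sum_le_sum fun i _ => ?_
            rw [hNh, abs_of_nonneg (hl i), Real.mul_rpow (hl i) (hN0 _)]
            exact mul_le_of_le_one_right (Real.rpow_nonneg (hl i) p)
              (Real.rpow_le_one (hN0 _) (hP i) hp0.le)
        _ ≤ (k : ℝ) ^ (1 - p / q) := aux_holder hp0 hpq k lam hl hs
        _ ≤ (n : ℝ) ^ (1 - p / q) := by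
            refine Real.rpow_le_rpow (Nat.cast_nonneg _) (Nat.cast_le.2 hk) ?_
            have : p / q < 1 := (div_lt_one hq0).2 hpq
            linarith
    have h6 := Real.rpow_le_rpow (Real.rpow_nonneg (hN0 _) p) h5
      (by positivity : (0:ℝ) ≤ 1 / p)
    rw [← Real.rpow_mul (hN0 _), mul_one_div, div_self hp0.ne', Real.rpow_one,
      ← Real.rpow_mul (Nat.cast_nonneg n)] at h6
    have hexp : (1 - p / q) * (1 / p) = 1 / p - 1 / q := by
      have hpq' : p / q * (1 / p) = 1 / q := by
        rw [div_mul_div_comm, mul_one, mul_comm q p, ← div_div, div_self hp0.ne']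
      rw [sub_mul, one_mul, hpq']
    rwa [hexp] at h6
  · push_neg at hk
    obtain ⟨lam', hl', hs', hsum', i₀, hi₀⟩ := aux_perturb hq0 hq1 hk lam P hl hs
    obtain ⟨m, rfl⟩ : ∃ m, k = m + 1 := ⟨k - 1, by omega⟩
    rw [← hsum', Fin.sum_univ_succAbove _ i₀, hi₀, zero_smul, zero_add]
    refine IH m (by omega) _ _ (fun j => hl' _) (fun j => hP _) ?_
    have hs'' := hs'
    rw [Fin.sum_univ_succAbove (fun i => lam' i ^ q) i₀, hi₀,
      Real.zero_rpow hq0.ne', zero_add] at hs''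
    exact hs''

theorem distance_to_q_envelope (p q : ℝ) (hp0 : 0 < p) (hpq : p < q) (hq1 : q ≤ 1)
    (n : ℕ) (N : (Fin n → ℝ) → ℝ)
    (hN0 : ∀ x, 0 ≤ N x) (hNe : ∀ x, N x = 0 ↔ x = 0)
    (hNh : ∀ (a : ℝ) (x : Fin n → ℝ), N (a • x) = |a| * N x)
    (hNp : ∀ x y : Fin n → ℝ, N (x + y) ^ p ≤ N x ^ p + N y ^ p) :
    ∀ x : Fin n → ℝ,
      gauge (pConvHull q {y : Fin n → ℝ | N y ≤ 1}) x ≤ N x ∧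
      N x ≤ (n : ℝ) ^ ((1 : ℝ) / p - 1 / q) *
              gauge (pConvHull q {y : Fin n → ℝ | N y ≤ 1}) x := by
  have hq0 : 0 < q := hp0.trans hpq
  have hNzero : N 0 = 0 := (hNe 0).2 rfl
  set C : ℝ := (n : ℝ) ^ ((1 : ℝ) / p - 1 / q) with hCdef
  set B : Set (Fin n → ℝ) := {y | N y ≤ 1} with hBdef
  set S : Set (Fin n → ℝ) := {y | ∃ (k : ℕ) (lam : Fin k → ℝ) (P : Fin k → Fin n → ℝ),
    (∀ i, 0 ≤ lam i) ∧ (∀ i, N (P i) ≤ 1) ∧ (∑ i, lam i ^ q ≤ 1) ∧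
    ∑ i, lam i • P i = y} with hSdef
  have hSconv : PConvex q S := by
    rintro y ⟨k, lam, P, hl, hP, hs, rfl⟩ z ⟨l, mu, Q, hm, hQ, ht, rfl⟩ a b ha hb hab
    refine ⟨k + l, Fin.append (fun i => a * lam i) (fun j => b * mu j),
      Fin.append P Q, ?_, ?_, ?_, ?_⟩
    · refine Fin.addCases (fun i => ?_) (fun j => ?_)
      · rw [Fin.append_left]; exact mul_nonneg ha (hl i)
      · rw [Fin.append_right]; exact mul_nonneg hb (hm j)
    · refine Fin.addCases (fun i => ?_) (fun j => ?_)
      · rw [Fin.append_left]; exact hP i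
      · rw [Fin.append_right]; exact hQ j
    · rw [Fin.sum_univ_add]
      simp only [Fin.append_left, Fin.append_right]
      have e1 : ∀ i : Fin k, (a * lam i) ^ q = a ^ q * lam i ^ q := fun i =>
        Real.mul_rpow ha (hl i)
      have e2 : ∀ j : Fin l, (b * mu j) ^ q = b ^ q * mu j ^ q := fun j =>
        Real.mul_rpow hb (hm j)
      simp only [e1, e2, ← Finset.mul_sum]
      calc a ^ q * ∑ i, lam i ^ q + b ^ q * ∑ j, mu j ^ q
          ≤ a ^ q * 1 + b ^ q * 1 := by
            gcongr <;> positivity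
        _ = 1 := by rw [mul_one, mul_one, hab]
    · rw [Fin.sum_univ_add]
      simp only [Fin.append_left, Fin.append_right, mul_smul, ← Finset.smul_sum]
  have hBS : B ⊆ S := by
    intro x hx
    refine ⟨1, fun _ => 1, fun _ => x, fun _ => zero_le_one, fun _ => hx, ?_, ?_⟩
    · simp [Real.one_rpow]
    · simp
  have hES : pConvHull q B ⊆ S := Set.sInter_subset_of_mem ⟨hSconv, hBS⟩
  have hBE : B ⊆ pConvHull q B := Set.subset_sInter fun T hT => hT.2
  have hEbound : ∀ y ∈ pConvHull q B, N y ≤ C := by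
    intro y hy
    obtain ⟨k, lam, P, hl, hP, hs, rfl⟩ := hES hy
    exact aux_key hp0 hpq hq1 hN0 hNzero hNh hNp k lam P hl hP hs
  have hmemNx : ∀ x : Fin n → ℝ, x ≠ 0 → x ∈ N x • pConvHull q B := by
    intro x hx
    have hNx : 0 < N x := (hN0 x).lt_of_ne fun h => hx ((hNe x).1 h.symm)
    refine Set.mem_smul_set.2 ⟨(N x)⁻¹ • x, hBE ?_, smul_inv_smul₀ hNx.ne' x⟩
    show N ((N x)⁻¹ • x) ≤ 1
    rw [hNh, abs_of_nonneg (inv_nonneg.2 hNx.le), inv_mul_cancel₀ hNx.ne']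
  intro x
  by_cases hx : x = 0
  · subst hx
    rw [gauge_zero, hNzero]
    simp
  have hNx : 0 < N x := (hN0 x).lt_of_ne fun h => hx ((hNe x).1 h.symm)
  have hn : 0 < n := by
    rcases Nat.eq_zero_or_pos n with h | h
    · exfalso; exact hx (by subst h; exact Subsingleton.elim x 0)
    · exact h
  have hC : 0 < C := Real.rpow_pos_of_pos (by exact_mod_cast hn) _
  constructor
  · exact gauge_le_of_mem hNx.le (hmemNx x hx)
  · have hgauge : N x / C ≤ gauge (pConvHull q B) x := by
      rw [gauge_def]
      refine le_csInf ⟨N x, Set.mem_sep (Set.mem_Ioi.2 hNx) (hmemNx x hx)⟩ ?_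
      rintro r ⟨hr, hxr⟩
      rw [Set.mem_Ioi] at hr
      obtain ⟨e, he, rfl⟩ := Set.mem_smul_set.1 hxr
      rw [div_le_iff₀ hC, hNh, abs_of_nonneg hr.le]
      exact mul_le_mul_of_nonneg_left (hEbound e he) hr.le
    rw [div_le_iff₀ hC] at hgauge
    calc N x ≤ gauge (pConvHull q B) x * C := hgauge
      _ = C * gauge (pConvHull q B) x := mul_comm _ _
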